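/- Let ν_1, ν_2 have exponential tails: G_1(x) = C_1·exp(-λ_1 x) and G_2(x) = C_2·exp(-λ_2 x) for x large enough, with 0 < λ_1 < λ_2. Set δ = λ_2/λ_1 - 1 and x_n = (1/λ_1)(log n + log C_1 - log(δ log n)). Then exp(-n·G_1(x_n)) = n^{-δ} and n·G_2(x_n) = O((log n)^{δ+1}/n^δ), so both P(X_{1,n}^+ ≤ x_n) and P(X_{2,n}^+ ≥ x_n) are O((log n)^{δ+1}/n^δ). -/

import Mathlib

open MeasureTheory Real Set Filter Asymptotics Topology

private lemma log_le_half (t : ℝ) (ht : 0 < t) : Real.log t ≤ t / 2 := by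
  have h1 : Real.log (Real.sqrt t) ≤ Real.sqrt t - 1 :=
    Real.log_le_sub_one_of_pos (Real.sqrt_pos.2 ht)
  have h2 : Real.log (Real.sqrt t) = Real.log t / 2 := Real.log_sqrt ht.le
  nlinarith [Real.sq_sqrt ht.le, Real.sqrt_nonneg t, sq_nonneg (Real.sqrt t - 2)]

/-- exponential tails.  If `G₁ x = C₁ exp (-λ₁ x)` and `G₂ x = C₂ exp (-λ₂ x)`
for `x` large enough, `0 < λ₁ < λ₂`, `δ = λ₂/λ₁ - 1` and
`xₙ = (1/λ₁)(log n + log C₁ - log (δ log n))`, then eventually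
`exp (-n G₁ (xₙ)) = n ^ (-δ)`, `n * G₂ (xₙ) = O ((log n)^(δ+1) / n^δ)`, and both
`P(X₁ₙ⁺ ≤ xₙ)` and `P(X₂ₙ⁺ ≥ xₙ)` are `O ((log n)^(δ+1) / n^δ)`. -/
theorem stmt_1
    (μ₁ μ₂ : Measure ℝ) [IsProbabilityMeasure μ₁] [IsProbabilityMeasure μ₂]
    (G₁ G₂ : ℝ → ℝ)
    (hG₁ : ∀ x, G₁ x = (μ₁ (Set.Ioi x)).toReal)
    (hG₂ : ∀ x, G₂ x = (μ₂ (Set.Ioi x)).toReal)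
    (C₁ C₂ l₁ l₂ : ℝ) (hC₁ : 0 < C₁) (hC₂ : 0 < C₂)
    (hl₁ : 0 < l₁) (hl : l₁ < l₂)
    (htail : ∃ x₀ : ℝ, ∀ x ≥ x₀,
      G₁ x = C₁ * Real.exp (-l₁ * x) ∧ G₂ x = C₂ * Real.exp (-l₂ * x))
    (δ : ℝ) (hδ : δ = l₂ / l₁ - 1)
    (xn : ℕ → ℝ)
    (hxn : ∀ n : ℕ, xn n = (1 / l₁) * (Real.log n + Real.log C₁ - Real.log (δ * Real.log n))) :
    (∀ᶠ n : ℕ in atTop, Real.exp (-(n : ℝ) * G₁ (xn n)) = (n : ℝ) ^ (-δ)) ∧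
    (fun n : ℕ => (n : ℝ) * G₂ (xn n))
      =O[atTop] (fun n : ℕ => (Real.log n) ^ (δ + 1) / (n : ℝ) ^ δ) ∧
    (fun n : ℕ => ((μ₁ (Set.Iic (xn n))).toReal) ^ n)
      =O[atTop] (fun n : ℕ => (Real.log n) ^ (δ + 1) / (n : ℝ) ^ δ) ∧
    (fun n : ℕ => 1 - ((μ₂ (Set.Iio (xn n))).toReal) ^ n)
      =O[atTop] (fun n : ℕ => (Real.log n) ^ (δ + 1) / (n : ℝ) ^ δ) := by
  obtain ⟨x₀, hx₀⟩ := htail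
  have hl₂ : 0 < l₂ := hl₁.trans hl
  have hδpos : 0 < δ := by
    rw [hδ]
    have : 1 < l₂ / l₁ := (one_lt_div hl₁).2 hl
    linarith
  have hδ1 : l₁ * (δ + 1) = l₂ := by
    rw [hδ]; field_simp; ring
  -- the value of μ₂ on closed half-lines, in the tail region
  have hIci : ∀ x, x₀ < x → (μ₂ (Set.Ici x)).toReal = C₂ * Real.exp (-l₂ * x) := by
    intro x hx
    refine le_antisymm ?_ ?_
    · have htd : Tendsto (fun y : ℝ => C₂ * Real.exp (-l₂ * y)) (𝓝[<] x)
          (𝓝 (C₂ * Real.exp (-l₂ * x))) :=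
        ((continuous_const.mul ((continuous_const.mul continuous_id).rexp)).tendsto x).mono_left
          nhdsWithin_le_nhds
      have hevy : ∀ᶠ y in 𝓝[<] x, (μ₂ (Set.Ici x)).toReal ≤ C₂ * Real.exp (-l₂ * y) := by
        filter_upwards [Ico_mem_nhdsLT hx] with y hy
        have hmono : μ₂ (Set.Ici x) ≤ μ₂ (Set.Ioi y) :=
          measure_mono (fun z hz => lt_of_lt_of_le hy.2 hz)
        have := ENNReal.toReal_mono (measure_ne_top _ _) hmono
        rw [← hG₂ y, (hx₀ y hy.1).2] at this
        exact this
      exact ge_of_tendsto htd hevy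
    · have hmono : μ₂ (Set.Ioi x) ≤ μ₂ (Set.Ici x) := measure_mono Set.Ioi_subset_Ici_self
      have := ENNReal.toReal_mono (measure_ne_top _ _) hmono
      rw [← hG₂ x, (hx₀ x hx.le).2] at this
      exact this
  -- eventual facts
  have hlogT : Tendsto (fun n : ℕ => Real.log n) atTop atTop :=
    Real.tendsto_log_atTop.comp tendsto_natCast_atTop_atTop
  have hT : Tendsto (fun n : ℕ => Real.log n / 2 + (Real.log C₁ - Real.log δ)) atTop atTop :=
    (hlogT.atTop_div_const (by norm_num)).atTop_add tendsto_const_nhds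
  have hev : ∀ᶠ n : ℕ in atTop,
      1 ≤ Real.log n ∧ l₁ * x₀ < Real.log n / 2 + (Real.log C₁ - Real.log δ) ∧ 1 ≤ n := by
    filter_upwards [hlogT.eventually_ge_atTop 1, hT.eventually_gt_atTop (l₁ * x₀),
      eventually_ge_atTop 1] with n h1 h2 h3
    exact ⟨h1, h2, h3⟩
  -- master eventual computation
  have master : ∀ᶠ n : ℕ in atTop,
      G₁ (xn n) = δ * Real.log n / n ∧
      Real.exp (-(n : ℝ) * G₁ (xn n)) = (n : ℝ) ^ (-δ) ∧
      (n : ℝ) * G₂ (xn n)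
        = (C₂ * (δ / C₁) ^ (δ + 1)) * ((Real.log n) ^ (δ + 1) / (n : ℝ) ^ δ) ∧
      (μ₂ (Set.Ici (xn n))).toReal = G₂ (xn n) ∧
      (n : ℝ) ^ (-δ) ≤ (Real.log n) ^ (δ + 1) / (n : ℝ) ^ δ := by
    filter_upwards [hev] with n ⟨hL1, hbig, hn1⟩
    set L := Real.log n with hLdef
    have hL0 : 0 < L := lt_of_lt_of_le one_pos hL1
    have hn0 : (0 : ℝ) < n := by exact_mod_cast hn1
    have hδL : 0 < δ * L := mul_pos hδpos hL0
    have hloglog : Real.log L ≤ L / 2 := log_le_half L hL0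
    have hlog_split : Real.log (δ * L) = Real.log δ + Real.log L :=
      Real.log_mul hδpos.ne' hL0.ne'
    -- xn n is in the tail region
    have hxg : x₀ < xn n := by
      rw [hxn n, ← hLdef]
      rw [show (1 / l₁) * (L + Real.log C₁ - Real.log (δ * L))
            = (L + Real.log C₁ - Real.log (δ * L)) / l₁ by ring]
      rw [lt_div_iff₀ hl₁, hlog_split]
      nlinarith
    -- exp(-l₁ xn) = δ L / (n C₁)
    have hA : Real.exp (-l₁ * xn n) = δ * L / (n * C₁) := by
      have : -l₁ * xn n = Real.log (δ * L) - (Real.log n + Real.log C₁) := by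
        rw [hxn n, ← hLdef]; field_simp; ring
      rw [this, Real.exp_sub, Real.exp_add, Real.exp_log hδL, Real.exp_log hn0,
        Real.exp_log hC₁]
    have ha : G₁ (xn n) = δ * L / n := by
      rw [(hx₀ (xn n) hxg.le).1, hA]
      field_simp
    have hnδpos : (0 : ℝ) < (n : ℝ) ^ δ := Real.rpow_pos_of_pos hn0 δ
    have hc : Real.exp (-(n : ℝ) * G₁ (xn n)) = (n : ℝ) ^ (-δ) := by
      rw [ha, Real.rpow_def_of_pos hn0]
      congr 1
      field_simp
      ring
    -- exp(-l₂ xn) and part (b)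
    have hB : Real.exp (-l₂ * xn n) = (δ * L / (n * C₁)) ^ (δ + 1) := by
      rw [← hA, ← Real.exp_mul]
      congr 1
      rw [← hδ1]; ring
    have hb : (n : ℝ) * G₂ (xn n)
        = (C₂ * (δ / C₁) ^ (δ + 1)) * (L ^ (δ + 1) / (n : ℝ) ^ δ) := by
      rw [(hx₀ (xn n) hxg.le).2, hB]
      have h1 : δ * L / (n * C₁) = (δ / C₁) * (L / n) := by field_simp
      rw [h1, Real.mul_rpow (by positivity) (by positivity),
        Real.div_rpow hL0.le hn0.le, Real.rpow_add_one hn0.ne' δ]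
      field_simp
    -- (d)
    have hd : (μ₂ (Set.Ici (xn n))).toReal = G₂ (xn n) := by
      rw [hIci (xn n) hxg, (hx₀ (xn n) hxg.le).2]
    -- (e)
    have he : (n : ℝ) ^ (-δ) ≤ L ^ (δ + 1) / (n : ℝ) ^ δ := by
      rw [Real.rpow_neg hn0.le]
      have h1 : (1 : ℝ) ≤ L ^ (δ + 1) := by
        calc (1 : ℝ) = 1 ^ (δ + 1) := (Real.one_rpow _).symm
        _ ≤ L ^ (δ + 1) := Real.rpow_le_rpow zero_le_one hL1 (by positivity)
      rw [inv_eq_one_div, div_le_div_iff₀ hnδpos hnδpos]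
      nlinarith
    exact ⟨ha, hc, hb, hd, he⟩
  set R : ℕ → ℝ := fun n : ℕ => (Real.log n) ^ (δ + 1) / (n : ℝ) ^ δ with hR
  have hRnonneg : ∀ᶠ n : ℕ in atTop, 0 ≤ R n := by
    filter_upwards [hev] with n ⟨hL1, _, hn1⟩
    have hn0 : (0 : ℝ) < n := by exact_mod_cast hn1
    have : (0:ℝ) < Real.log n := lt_of_lt_of_le one_pos hL1
    positivity
  have hG₁nonneg : ∀ x, 0 ≤ G₁ x := fun x => by rw [hG₁ x]; exact ENNReal.toReal_nonneg
  have hG₂nonneg : ∀ x, 0 ≤ G₂ x := fun x => by rw [hG₂ x]; exact ENNReal.toReal_nonneg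
  have hprob₁ : ∀ x, G₁ x ≤ 1 := by
    intro x
    rw [hG₁ x]
    exact ENNReal.toReal_le_of_le_ofReal one_pos.le (by simpa using prob_le_one)
  refine ⟨?_, ?_, ?_, ?_⟩
  · filter_upwards [master] with n hn
    exact hn.2.1
  · apply IsBigO.of_bound (C₂ * (δ / C₁) ^ (δ + 1))
    filter_upwards [master, hRnonneg, hev] with n hn hRn ⟨hL1, _, hn1⟩
    have hn0 : (0 : ℝ) ≤ n := Nat.cast_nonneg n
    rw [Real.norm_eq_abs, Real.norm_eq_abs, abs_of_nonneg hRn,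
      abs_of_nonneg (mul_nonneg hn0 (hG₂nonneg _)), hn.2.2.1]
  · apply IsBigO.of_bound 1
    filter_upwards [master, hRnonneg] with n hn hRn
    have hIic : (μ₁ (Set.Iic (xn n))).toReal = 1 - G₁ (xn n) := by
      rw [hG₁, ← Set.compl_Ioi, prob_compl_eq_one_sub measurableSet_Ioi,
        ENNReal.toReal_sub_of_le prob_le_one ENNReal.one_ne_top, ENNReal.toReal_one]
    have h1 : (0:ℝ) ≤ 1 - G₁ (xn n) := by linarith [hprob₁ (xn n)]
    have h2 : 1 - G₁ (xn n) ≤ Real.exp (-(G₁ (xn n))) := by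
      linarith [Real.add_one_le_exp (-(G₁ (xn n)))]
    have h3 : ((μ₁ (Set.Iic (xn n))).toReal) ^ n ≤ Real.exp (-(n:ℝ) * G₁ (xn n)) := by
      rw [hIic]
      calc (1 - G₁ (xn n)) ^ n ≤ (Real.exp (-(G₁ (xn n)))) ^ n := pow_le_pow_left₀ h1 h2 n
      _ = Real.exp (-(n:ℝ) * G₁ (xn n)) := by
          rw [← Real.exp_nat_mul]; ring_nf
    rw [Real.norm_eq_abs, Real.norm_eq_abs, abs_of_nonneg hRn, one_mul,
      abs_of_nonneg (pow_nonneg (by rw [hIic]; exact h1) n)]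
    calc ((μ₁ (Set.Iic (xn n))).toReal) ^ n ≤ Real.exp (-(n:ℝ) * G₁ (xn n)) := h3
    _ = (n:ℝ) ^ (-δ) := hn.2.1
    _ ≤ R n := hn.2.2.2.2
  · apply IsBigO.of_bound (C₂ * (δ / C₁) ^ (δ + 1))
    filter_upwards [master, hRnonneg] with n hn hRn
    set b := (μ₂ (Set.Iio (xn n))).toReal with hbdef
    have hIio : b = 1 - (μ₂ (Set.Ici (xn n))).toReal := by
      rw [hbdef, ← Set.compl_Ici, prob_compl_eq_one_sub measurableSet_Ici,
        ENNReal.toReal_sub_of_le prob_le_one ENNReal.one_ne_top, ENNReal.toReal_one]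
    have hb0 : 0 ≤ b := ENNReal.toReal_nonneg
    have hb1 : b ≤ 1 := by
      rw [hIio]
      simp [ENNReal.toReal_nonneg]
    have hbern : 1 + (n : ℝ) * (b - 1) ≤ b ^ n := by
      have := one_add_mul_le_pow (a := b - 1) (by linarith) n
      simpa using this
    have hkey : 1 - b ^ n ≤ (n : ℝ) * G₂ (xn n) := by
      have h1 : 1 - b = G₂ (xn n) := by rw [hIio, hn.2.2.2.1]; ring
      nlinarith
    rw [Real.norm_eq_abs, Real.norm_eq_abs, abs_of_nonneg hRn,
      abs_of_nonneg (by linarith [pow_le_one₀ hb0 hb1 (n := n)] : (0:ℝ) ≤ 1 - b ^ n)]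
    calc 1 - b ^ n ≤ (n : ℝ) * G₂ (xn n) := hkey
    _ = (C₂ * (δ / C₁) ^ (δ + 1)) * R n := hn.2.2.1
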